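/- Let X = (X₁,…,X_L) be a coset codeword with components Xᵢ = cᵢ + Zᵢ where Zᵢ ∈ I (an ideal of 𝒢) and (c₁,…,c_L) are coset leaders selected by a binary code of minimum Hamming distance d_min. Then det(Σᵢ XᵢXᵢᴴ) ≥ min( min_{0 ≠ Z ∈ I} |det Z|², d_min²·(1/5) ) for X ≠ 0. -/

import Mathlib

open Matrix

/-- The golden number θ = (1+√5)/2, as a complex number. -/
noncomputable def gold : ℂ := (1 + Real.sqrt 5) / 2

/-- Squared Frobenius norm of a 2×2 complex matrix. -/
noncomputable def fro2 (M : Matrix (Fin 2) (Fin 2) ℂ) : ℝ :=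
  ∑ i, ∑ j, ‖M i j‖ ^ 2

/-- The element `a + bθ + i(c + dθ)` of `ℤ[i,θ]`. -/
noncomputable def zit (a b c d : ℤ) : ℂ :=
  (a : ℂ) + b * gold + Complex.I * ((c : ℂ) + d * gold)

/-- Its conjugate under `θ ↦ 1 − θ`. -/
noncomputable def zitBar (a b c d : ℤ) : ℂ :=
  (a : ℂ) + b * (1 - gold) + Complex.I * ((c : ℂ) + d * (1 - gold))

/-- The matrix `[[w₁, w₂], [i·w̄₂, w̄₁]]` of the order `𝒪`, with
`w₁ = a + bθ + i(c+dθ)` and `w₂ = e + fθ + i(g+hθ)`. -/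
noncomputable def Omat (a b c d e f g h : ℤ) : Matrix (Fin 2) (Fin 2) ℂ :=
  !![zit a b c d, zit e f g h;
     Complex.I * zitBar e f g h, zitBar a b c d]

/-- Membership in the order `𝒪`. -/
def inO (W : Matrix (Fin 2) (Fin 2) ℂ) : Prop :=
  ∃ a b c d e f g h : ℤ, W = Omat a b c d e f g h

/-- `α = 1 + i·θ̄ = 1 + i(1−θ)`. -/
noncomputable def alphaG : ℂ := 1 + Complex.I * (1 - gold)

/-- `ᾱ = 1 + i·θ`. -/
noncomputable def alphaBarG : ℂ := 1 + Complex.I * gold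

/-- `A = diag(α, ᾱ)`. -/
noncomputable def Amat : Matrix (Fin 2) (Fin 2) ℂ := !![alphaG, 0; 0, alphaBarG]

/-- Membership in the Golden Code `𝒢 = (1/√5)·A·𝒪`. -/
def inG (X : Matrix (Fin 2) (Fin 2) ℂ) : Prop :=
  ∃ W, inO W ∧ X = ((Real.sqrt 5 : ℂ))⁻¹ • (Amat * W)
open GaussianInt Zsqrtd

namespace CS

/-- map to ZMod 5, sending i to 3 -/
def phi (z : GaussianInt) : ZMod 5 := ((z.re + 3 * z.im : ℤ) : ZMod 5)

lemma phi_mul (z w : GaussianInt) : phi (z * w) = phi z * phi w := by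
  have h : ((z * w).re + 3 * (z * w).im : ℤ)
      = (z.re + 3 * z.im) * (w.re + 3 * w.im) - 10 * (z.im * w.im) := by
    simp [Zsqrtd.re_mul, Zsqrtd.im_mul]; ring
  unfold phi
  rw [h]
  push_cast
  have h10 : ((10 : ℤ) : ZMod 5) = 0 := by decide
  push_cast at h10
  rw [h10]
  ring

lemma phi_add (z w : GaussianInt) : phi (z + w) = phi z + phi w := by
  unfold phi
  simp only [Zsqrtd.re_add, Zsqrtd.im_add]
  push_cast
  ring

lemma phi_sub (z w : GaussianInt) : phi (z - w) = phi z - phi w := by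
  unfold phi
  simp only [Zsqrtd.re_sub, Zsqrtd.im_sub]
  push_cast
  ring

lemma pp_dvd_of_phi_zero {z : GaussianInt} (h : phi z = 0) :
    ∃ t : GaussianInt, z = ⟨2,1⟩ * t := by
  have h5 : (5:ℤ) ∣ z.re + 3 * z.im := by
    have := (ZMod.intCast_zmod_eq_zero_iff_dvd (z.re + 3 * z.im) 5).mp h
    exact_mod_cast this
  obtain ⟨k, hk⟩ := h5
  refine ⟨⟨2*k - z.im, z.im - k⟩, ?_⟩
  have hz : z.re = 5*k - 3*z.im := by omega
  ext <;> simp [Zsqrtd.re_mul, Zsqrtd.im_mul] <;> omega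

end CS

namespace CS

def Q (x y : GaussianInt) : GaussianInt := x^2 + x*y - y^2

lemma zmod1 : ∀ s t : ZMod 5, s^2 = 3*t^2 → s = 0 ∧ t = 0 := by decide
lemma zmod2 : ∀ s t : ZMod 5, 4*s^2 = 3*(4*t^2) → s = 0 ∧ t = 0 := by decide
lemma zmodQ : ∀ s t : ZMod 5, s^2 + s*t - t^2 = (s+3*t)^2 := by decide

lemma phi_three : phi (3 : GaussianInt) = 3 := by decide
lemma phi_five : phi (5 : GaussianInt) = 0 := by decide
lemma phi_ii : phi (⟨0,1⟩ : GaussianInt) = 3 := by decide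
lemma phi_pp : phi (⟨2,1⟩ : GaussianInt) = 0 := by decide
lemma phi_ppb : phi (⟨2,-1⟩ : GaussianInt) = 4 := by decide

lemma phi_sq (x : GaussianInt) : phi (x^2) = (phi x)^2 := by
  rw [sq, sq, phi_mul]

lemma phiQ (x y : GaussianInt) : phi (Q x y) = (phi x + 3 * phi y)^2 := by
  unfold Q
  rw [phi_sub, phi_add, phi_sq, phi_sq, phi_mul, ← zmodQ]

lemma hpp_mul : (⟨2,1⟩ : GaussianInt) * ⟨2,-1⟩ = 5 := by decide

lemma pp_ne : (⟨2,1⟩ : GaussianInt) ≠ 0 := by decide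

lemma Qsub (u y : GaussianInt) :
    Q (⟨2,1⟩*u - 3*y) y = ⟨2,1⟩ * (⟨2,1⟩*u^2 - 5*(u*y) + ⟨2,-1⟩*y^2) := by
  unfold Q
  linear_combination (-(y^2)) * hpp_mul

lemma descent_step {x₁ y₁ x₂ y₂ : GaussianInt} (hQ : Q x₁ y₁ = ⟨0,1⟩ * Q x₂ y₂) :
    ∃ x₁' y₁' x₂' y₂' : GaussianInt, x₁ = ⟨2,1⟩*x₁' ∧ y₁ = ⟨2,1⟩*y₁' ∧
      x₂ = ⟨2,1⟩*x₂' ∧ y₂ = ⟨2,1⟩*y₂' ∧ Q x₁' y₁' = ⟨0,1⟩ * Q x₂' y₂' := by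
  have h1 : phi (Q x₁ y₁) = phi (⟨0,1⟩ : GaussianInt) * phi (Q x₂ y₂) := by
    rw [← phi_mul, hQ]
  rw [phiQ, phiQ, phi_ii] at h1
  obtain ⟨hs1, hs2⟩ := zmod1 _ _ h1
  have ht1 : phi (x₁ + 3*y₁) = 0 := by rw [phi_add, phi_mul, phi_three]; exact hs1
  have ht2 : phi (x₂ + 3*y₂) = 0 := by rw [phi_add, phi_mul, phi_three]; exact hs2
  obtain ⟨u₁, hu₁⟩ := pp_dvd_of_phi_zero ht1
  obtain ⟨u₂, hu₂⟩ := pp_dvd_of_phi_zero ht2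
  have hx₁ : x₁ = ⟨2,1⟩*u₁ - 3*y₁ := by linear_combination hu₁
  have hx₂ : x₂ = ⟨2,1⟩*u₂ - 3*y₂ := by linear_combination hu₂
  have hQ0 := hQ
  rw [hx₁, hx₂, Qsub, Qsub] at hQ
  set R₁ : GaussianInt := ⟨2,1⟩*u₁^2 - 5*(u₁*y₁) + ⟨2,-1⟩*y₁^2 with hR₁
  set R₂ : GaussianInt := ⟨2,1⟩*u₂^2 - 5*(u₂*y₂) + ⟨2,-1⟩*y₂^2 with hR₂
  have hR : R₁ = ⟨0,1⟩ * R₂ := by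
    apply mul_left_cancel₀ pp_ne
    rw [hQ]; ring
  have h2 : phi R₁ = phi (⟨0,1⟩ : GaussianInt) * phi R₂ := by rw [← phi_mul, hR]
  have hphiR : ∀ u y : GaussianInt,
      phi (⟨2,1⟩*u^2 - 5*(u*y) + ⟨2,-1⟩*y^2) = 4 * (phi y)^2 := by
    intro u y
    simp only [phi_add, phi_sub, phi_mul, phi_sq, phi_pp, phi_five, phi_ppb]
    ring
  rw [hR₁, hR₂, hphiR, hphiR, phi_ii] at h2
  obtain ⟨hy1, hy2⟩ := zmod2 _ _ h2
  obtain ⟨y₁', hy₁'⟩ := pp_dvd_of_phi_zero hy1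
  obtain ⟨y₂', hy₂'⟩ := pp_dvd_of_phi_zero hy2
  refine ⟨u₁ - 3*y₁', y₁', u₂ - 3*y₂', y₂', ?_, hy₁', ?_, hy₂', ?_⟩
  · rw [hx₁, hy₁']; ring
  · rw [hx₂, hy₂']; ring
  · apply mul_left_cancel₀ (pow_ne_zero 2 pp_ne)
    have e : ∀ x y : GaussianInt, Q (⟨2,1⟩*x) (⟨2,1⟩*y) = ⟨2,1⟩^2 * Q x y := by
      intro x y; unfold Q; ring
    calc (⟨2,1⟩:GaussianInt)^2 * Q (u₁ - 3*y₁') y₁'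
        = Q (⟨2,1⟩*(u₁ - 3*y₁')) (⟨2,1⟩*y₁') := (e _ _).symm
      _ = Q x₁ y₁ := by rw [hx₁, hy₁']; ring_nf
      _ = ⟨0,1⟩ * Q x₂ y₂ := hQ0
      _ = ⟨0,1⟩ * (⟨2,1⟩^2 * Q (u₂ - 3*y₂') y₂') := by
          rw [show x₂ = ⟨2,1⟩*(u₂ - 3*y₂') from by rw [hx₂, hy₂']; ring, hy₂', e]
      _ = ⟨2,1⟩^2 * (⟨0,1⟩ * Q (u₂ - 3*y₂') y₂') := by ring

end CS

namespace CS

lemma norm_pp : Zsqrtd.norm (⟨2,1⟩ : GaussianInt) = 5 := by decide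

lemma descent_aux : ∀ N : ℕ, ∀ x₁ y₁ x₂ y₂ : GaussianInt,
    (Zsqrtd.norm x₁ + Zsqrtd.norm y₁ + Zsqrtd.norm x₂ + Zsqrtd.norm y₂).natAbs ≤ N →
    Q x₁ y₁ = ⟨0,1⟩ * Q x₂ y₂ → x₁ = 0 ∧ y₁ = 0 ∧ x₂ = 0 ∧ y₂ = 0 := by
  intro N
  induction N using Nat.strong_induction_on with
  | _ N ih =>
  intro x₁ y₁ x₂ y₂ hN hQ
  have n1 := Zsqrtd.norm_nonneg (by norm_num : (-1:ℤ) ≤ 0) x₁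
  have n2 := Zsqrtd.norm_nonneg (by norm_num : (-1:ℤ) ≤ 0) y₁
  have n3 := Zsqrtd.norm_nonneg (by norm_num : (-1:ℤ) ≤ 0) x₂
  have n4 := Zsqrtd.norm_nonneg (by norm_num : (-1:ℤ) ≤ 0) y₂
  rcases Nat.eq_zero_or_pos N with rfl | hNpos
  · have h0 : Zsqrtd.norm x₁ = 0 ∧ Zsqrtd.norm y₁ = 0 ∧ Zsqrtd.norm x₂ = 0 ∧
        Zsqrtd.norm y₂ = 0 := by omega
    have hd : (-1:ℤ) < 0 := by norm_num
    exact ⟨(Zsqrtd.norm_eq_zero_iff hd _).mp h0.1, (Zsqrtd.norm_eq_zero_iff hd _).mp h0.2.1,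
      (Zsqrtd.norm_eq_zero_iff hd _).mp h0.2.2.1, (Zsqrtd.norm_eq_zero_iff hd _).mp h0.2.2.2⟩
  · obtain ⟨x₁', y₁', x₂', y₂', e1, e2, e3, e4, hQ'⟩ := descent_step hQ
    have hn : ∀ z z' : GaussianInt, z = ⟨2,1⟩ * z' → Zsqrtd.norm z = 5 * Zsqrtd.norm z' := by
      intro z z' h; rw [h, Zsqrtd.norm_mul, norm_pp]
    have m1 := hn _ _ e1; have m2 := hn _ _ e2; have m3 := hn _ _ e3; have m4 := hn _ _ e4
    have n1' := Zsqrtd.norm_nonneg (by norm_num : (-1:ℤ) ≤ 0) x₁'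
    have n2' := Zsqrtd.norm_nonneg (by norm_num : (-1:ℤ) ≤ 0) y₁'
    have n3' := Zsqrtd.norm_nonneg (by norm_num : (-1:ℤ) ≤ 0) x₂'
    have n4' := Zsqrtd.norm_nonneg (by norm_num : (-1:ℤ) ≤ 0) y₂'
    have hlt : (Zsqrtd.norm x₁' + Zsqrtd.norm y₁' + Zsqrtd.norm x₂' +
        Zsqrtd.norm y₂').natAbs < N := by
      have h1 : (Zsqrtd.norm x₁ + Zsqrtd.norm y₁ + Zsqrtd.norm x₂ + Zsqrtd.norm y₂).natAbs
          = 5 * (Zsqrtd.norm x₁' + Zsqrtd.norm y₁' + Zsqrtd.norm x₂' + Zsqrtd.norm y₂').natAbs := by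
        omega
      omega
    obtain ⟨z1, z2, z3, z4⟩ := ih _ hlt x₁' y₁' x₂' y₂' le_rfl hQ'
    rw [e1, e2, e3, e4, z1, z2, z3, z4]
    simp

end CS
namespace CS
open Complex

lemma sqrt5_sq : ((Real.sqrt 5 : ℝ) : ℂ)^2 = 5 := by
  norm_cast
  rw [Real.sq_sqrt] <;> norm_num

lemma gold_rel : gold * (1 - gold) = -1 := by
  unfold gold
  have h := sqrt5_sq
  push_cast
  linear_combination (-1/4 : ℂ) * h

lemma quad (x y : ℂ) : (x + y*gold) * (x + y*(1-gold)) = x^2 + x*y - y^2 := by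
  linear_combination y^2 * gold_rel

lemma zit_eq (a b c d : ℤ) :
    zit a b c d = ((⟨a,c⟩ : GaussianInt) : ℂ) + ((⟨b,d⟩ : GaussianInt) : ℂ) * gold := by
  rw [GaussianInt.toComplex_def', GaussianInt.toComplex_def']
  unfold zit
  ring

lemma zitBar_eq (a b c d : ℤ) :
    zitBar a b c d = ((⟨a,c⟩ : GaussianInt) : ℂ) + ((⟨b,d⟩ : GaussianInt) : ℂ) * (1 - gold) := by
  rw [GaussianInt.toComplex_def', GaussianInt.toComplex_def']
  unfold zitBar
  ring

lemma toC_Q (x y : GaussianInt) :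
    ((Q x y : GaussianInt) : ℂ) = (x : ℂ)^2 + (x:ℂ)*(y:ℂ) - (y:ℂ)^2 := by
  unfold Q
  simp only [_root_.map_sub, _root_.map_add, _root_.map_mul, map_pow]

lemma det_Omat (a b c d e f g h : ℤ) :
    (Omat a b c d e f g h).det
      = ((Q ⟨a,c⟩ ⟨b,d⟩ - ⟨0,1⟩ * Q ⟨e,g⟩ ⟨f,h⟩ : GaussianInt) : ℂ) := by
  unfold Omat
  rw [Matrix.det_fin_two_of]
  rw [_root_.map_sub, _root_.map_mul, toC_Q, toC_Q]
  simp only [GaussianInt.toComplex_def']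
  unfold zit zitBar
  have q1 := quad ((a:ℂ) + c*Complex.I) ((b:ℂ) + d*Complex.I)
  have q2 := quad ((e:ℂ) + g*Complex.I) ((f:ℂ) + h*Complex.I)
  linear_combination q1 - Complex.I * q2

lemma det_Amat : Amat.det = 2 + Complex.I := by
  unfold Amat alphaG alphaBarG
  rw [Matrix.det_fin_two_of]
  linear_combination (Complex.I^2) * gold_rel + (-1 : ℂ) * Complex.I_sq

lemma Omat_zero : Omat 0 0 0 0 0 0 0 0 = 0 := by
  have hz : zit 0 0 0 0 = 0 := by unfold zit; push_cast; ring
  have hzb : zitBar 0 0 0 0 = 0 := by unfold zitBar; push_cast; ring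
  unfold Omat
  rw [hz, hzb]
  ext i j
  fin_cases i <;> fin_cases j <;> simp

lemma gdet {X : Matrix (Fin 2) (Fin 2) ℂ} (hX : inG X) (hX0 : X ≠ 0) :
    1/5 ≤ ‖X.det‖ ^ 2 := by
  obtain ⟨W, ⟨a, b, c, d, e, f, g, h, rfl⟩, rfl⟩ := hX
  set gg : GaussianInt := Q ⟨a,c⟩ ⟨b,d⟩ - ⟨0,1⟩ * Q ⟨e,g⟩ ⟨f,h⟩ with hgg
  have hgne : gg ≠ 0 := by
    intro h0
    have hQ : Q (⟨a,c⟩ : GaussianInt) ⟨b,d⟩ = ⟨0,1⟩ * Q ⟨e,g⟩ ⟨f,h⟩ := by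
      have := sub_eq_zero.mp h0
      exact this
    obtain ⟨z1, z2, z3, z4⟩ := descent_aux _ _ _ _ _ le_rfl hQ
    have ha : a = 0 ∧ c = 0 := by
      have := Zsqrtd.ext_iff.mp z1; simpa using this
    have hb : b = 0 ∧ d = 0 := by
      have := Zsqrtd.ext_iff.mp z2; simpa using this
    have he : e = 0 ∧ g = 0 := by
      have := Zsqrtd.ext_iff.mp z3; simpa using this
    have hf : f = 0 ∧ h = 0 := by
      have := Zsqrtd.ext_iff.mp z4; simpa using this
    apply hX0
    rw [ha.1, ha.2, hb.1, hb.2, he.1, he.2, hf.1, hf.2, Omat_zero]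
    simp
  have hnorm : (1:ℤ) ≤ gg.norm := GaussianInt.norm_pos.mpr hgne
  have hns : (1:ℝ) ≤ Complex.normSq (gg : ℂ) := by
    rw [← GaussianInt.intCast_real_norm]
    exact_mod_cast hnorm
  have hdet : (((Real.sqrt 5 : ℝ) : ℂ)⁻¹ • (Amat * Omat a b c d e f g h)).det
      = ((5:ℂ))⁻¹ * ((2 + Complex.I) * (gg : ℂ)) := by
    rw [Matrix.det_smul, Matrix.det_mul, det_Amat, det_Omat]
    rw [Fintype.card_fin, ← hgg]
    rw [show (((Real.sqrt 5 : ℝ) : ℂ)⁻¹)^2 = (((Real.sqrt 5 : ℝ) : ℂ)^2)⁻¹ by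
      rw [inv_pow], sqrt5_sq]
  rw [hdet, Complex.sq_norm]
  rw [Complex.normSq_mul, Complex.normSq_mul]
  have h1 : Complex.normSq ((5:ℂ))⁻¹ = 1/25 := by
    rw [map_inv₀]
    norm_num [Complex.normSq_apply]
  have h2 : Complex.normSq (2 + Complex.I) = 5 := by
    norm_num [Complex.normSq_apply]
  rw [h1, h2]
  nlinarith [hns]

end CS

namespace CS
open Complex

local notation "conj'" => starRingEnd ℂ

lemma lagrange (A B C D : ℂ) :
    (Complex.normSq A + Complex.normSq B) * (Complex.normSq C + Complex.normSq D)
      - Complex.normSq (A * conj' C + B * conj' D) = Complex.normSq (A*D - B*C) := by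
  have h : ∀ w : ℂ, ((Complex.normSq w : ℝ) : ℂ) = w * conj' w := fun w => by
    rw [Complex.mul_conj]
  have main : (((Complex.normSq A + Complex.normSq B) * (Complex.normSq C + Complex.normSq D)
      - Complex.normSq (A * conj' C + B * conj' D) : ℝ) : ℂ)
      = ((Complex.normSq (A*D - B*C) : ℝ) : ℂ) := by
    push_cast
    rw [h, h, h, h, h, h]
    simp only [_root_.map_add, _root_.map_mul, _root_.map_sub, Complex.conj_conj]
    ring
  exact_mod_cast main

lemma mulH (X : Matrix (Fin 2) (Fin 2) ℂ) :
    X * Xᴴ = !![((Complex.normSq (X 0 0) + Complex.normSq (X 0 1) : ℝ) : ℂ),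
                X 0 0 * conj' (X 1 0) + X 0 1 * conj' (X 1 1);
                conj' (X 0 0 * conj' (X 1 0) + X 0 1 * conj' (X 1 1)),
                ((Complex.normSq (X 1 0) + Complex.normSq (X 1 1) : ℝ) : ℂ)] := by
  ext i j
  fin_cases i <;> fin_cases j <;>
    simp [Matrix.mul_apply, Fin.sum_univ_two, Matrix.conjTranspose_apply,
      Complex.mul_conj, _root_.map_add, _root_.map_mul] <;>
    push_cast <;> ring


lemma real_step (p q p₀ q₀ b b₀ D₀ T nzz : ℝ)
    (hp : 0 ≤ p) (hq : 0 ≤ q) (hp₀n : 0 ≤ p₀) (hq₀n : 0 ≤ q₀)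
    (hbn : 0 ≤ b) (hb₀n : 0 ≤ b₀) (hD₀n : 0 ≤ D₀) (hTn : 0 ≤ T)
    (hlag : p₀*q₀ - b₀^2 = D₀^2) (hbound : T^2 ≤ p*q - b^2)
    (htri : nzz ≤ (b + b₀)^2) :
    (T + D₀)^2 ≤ (p+p₀)*(q+q₀) - nzz := by
  set d : ℝ := Real.sqrt (p*q - b^2) with hd
  have hdn : 0 ≤ d := Real.sqrt_nonneg _
  have hd2 : d^2 = p*q - b^2 := Real.sq_sqrt (by nlinarith [sq_nonneg T])
  clear_value d
  clear hd
  have hTd : T ≤ d := by nlinarith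
  have key1 : (b*b₀ + d*D₀)^2 ≤ (p*q)*(p₀*q₀) := by
    nlinarith [sq_nonneg (b*D₀ - b₀*d)]
  have key2 : (p*q)*(p₀*q₀) ≤ ((p*q₀ + p₀*q)/2)^2 := by
    nlinarith [sq_nonneg (p*q₀ - p₀*q)]
  have hsumn : 0 ≤ (p*q₀ + p₀*q)/2 :=
    div_nonneg (add_nonneg (mul_nonneg hp hq₀n) (mul_nonneg hp₀n hq)) (by norm_num)
  have key3 : b*b₀ + d*D₀ ≤ (p*q₀ + p₀*q)/2 := by
    nlinarith [key1, key2, mul_nonneg hbn hb₀n, mul_nonneg hdn hD₀n]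
  have e1 : (T + D₀)^2 ≤ (d + D₀)^2 := by nlinarith
  nlinarith [e1, key3, htri]

set_option maxHeartbeats 1000000 in
lemma sum_bound {n : ℕ} (s : Finset (Fin n)) (X : Fin n → Matrix (Fin 2) (Fin 2) ℂ) :
    ∃ (p q : ℝ) (z : ℂ), 0 ≤ p ∧ 0 ≤ q ∧ Complex.normSq z ≤ p*q ∧
      (∑ k ∈ s, ‖(X k).det‖)^2 ≤ p*q - Complex.normSq z ∧
      (∑ k ∈ s, X k * (X k)ᴴ) = !![((p:ℝ):ℂ), z; conj' z, ((q:ℝ):ℂ)] := by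
  induction s using Finset.induction with
  | empty =>
    refine ⟨0, 0, 0, le_rfl, le_rfl, by simp, by simp, ?_⟩
    ext i j
    fin_cases i <;> fin_cases j <;> simp
  | @insert a s ha ih =>
    obtain ⟨p, q, z, hp, hq, hzpq, hbound, hmat⟩ := ih
    set p₀ : ℝ := Complex.normSq (X a 0 0) + Complex.normSq (X a 0 1) with hp₀
    set q₀ : ℝ := Complex.normSq (X a 1 0) + Complex.normSq (X a 1 1) with hq₀
    set z₀ : ℂ := X a 0 0 * conj' (X a 1 0) + X a 0 1 * conj' (X a 1 1) with hz₀
    have hp₀n : 0 ≤ p₀ := add_nonneg (Complex.normSq_nonneg _) (Complex.normSq_nonneg _)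
    have hq₀n : 0 ≤ q₀ := add_nonneg (Complex.normSq_nonneg _) (Complex.normSq_nonneg _)
    have hlag : p₀ * q₀ - Complex.normSq z₀ = Complex.normSq (X a).det := by
      rw [hp₀, hq₀, hz₀, lagrange, Matrix.det_fin_two]
    have hmatNew : (∑ k ∈ insert a s, X k * (X k)ᴴ)
        = !![(((p + p₀ : ℝ)):ℂ), z + z₀; conj' (z + z₀), (((q + q₀ : ℝ)):ℂ)] := by
      rw [Finset.sum_insert ha, hmat, mulH (X a), hp₀, hq₀, hz₀]
      ext i j
      fin_cases i <;> fin_cases j <;>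
        simp [_root_.map_add] <;> push_cast <;> ring
    set T : ℝ := ∑ k ∈ s, ‖(X k).det‖ with hT
    have hTn : 0 ≤ T := Finset.sum_nonneg fun k _ => norm_nonneg _
    set b : ℝ := ‖z‖ with hb
    set b₀ : ℝ := ‖z₀‖ with hb₀
    set D₀ : ℝ := ‖(X a).det‖ with hD₀
    have hbn : 0 ≤ b := norm_nonneg _
    have hb₀n : 0 ≤ b₀ := norm_nonneg _
    have hD₀n : 0 ≤ D₀ := norm_nonneg _
    have hb2 : b^2 = Complex.normSq z := Complex.sq_norm z
    have hb₀2 : b₀^2 = Complex.normSq z₀ := Complex.sq_norm z₀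
    have hD₀2 : D₀^2 = Complex.normSq (X a).det := Complex.sq_norm _
    set d : ℝ := Real.sqrt (p*q - Complex.normSq z) with hd
    have hdn : 0 ≤ d := Real.sqrt_nonneg _
    have hd2 : d^2 = p*q - Complex.normSq z := by
      rw [hd, Real.sq_sqrt]
      nlinarith [sq_nonneg T]
    have hgoal : (D₀ + T)^2 = (∑ k ∈ insert a s, ‖(X k).det‖)^2 := by
      rw [Finset.sum_insert ha]
    set nz := Complex.normSq z with hnz
    set nz₀ := Complex.normSq z₀ with hnz₀
    set nzz := Complex.normSq (z + z₀) with hnzz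
    set nd := Complex.normSq (X a).det with hnd
    have hnzzn : 0 ≤ nzz := Complex.normSq_nonneg _
    have htri : nzz ≤ (b + b₀)^2 := by
      rw [hnzz, ← Complex.sq_norm]
      apply pow_le_pow_left₀ (_root_.norm_nonneg _) (norm_add_le z z₀)
    clear_value p₀ q₀ z₀ T b b₀ D₀ d nz nz₀ nzz nd
    clear hmat
    have main : (T + D₀)^2 ≤ (p+p₀)*(q+q₀) - nzz := by
      refine real_step p q p₀ q₀ b b₀ D₀ T nzz hp hq hp₀n hq₀n hbn hb₀n hD₀n hTn ?_ ?_ htri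
      · rw [hb₀2, hD₀2]; exact hlag
      · rw [hb2]; exact hbound
    refine ⟨p + p₀, q + q₀, z + z₀, by linarith, by linarith, ?_, ?_, hmatNew⟩
    · rw [← hnzz]
      nlinarith [sq_nonneg (T + D₀), main]
    · rw [← hgoal, ← hnzz, add_comm D₀ T]
      exact main

end CS

namespace CS
open Complex

lemma zit_add (a b c d a' b' c' d' : ℤ) :
    zit a b c d + zit a' b' c' d' = zit (a+a') (b+b') (c+c') (d+d') := by
  unfold zit; push_cast; ring

lemma zitBar_add (a b c d a' b' c' d' : ℤ) :
    zitBar a b c d + zitBar a' b' c' d' = zitBar (a+a') (b+b') (c+c') (d+d') := by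
  unfold zitBar; push_cast; ring

lemma Omat_add (a b c d e f g h a' b' c' d' e' f' g' h' : ℤ) :
    Omat a b c d e f g h + Omat a' b' c' d' e' f' g' h'
      = Omat (a+a') (b+b') (c+c') (d+d') (e+e') (f+f') (g+g') (h+h') := by
  unfold Omat
  ext i j
  fin_cases i <;> fin_cases j <;> simp [← zit_add, ← zitBar_add] <;> ring

lemma inG_add {X Y : Matrix (Fin 2) (Fin 2) ℂ} (hX : inG X) (hY : inG Y) :
    inG (X + Y) := by
  obtain ⟨W1, ⟨a, b, c, d, e, f, g, h, rfl⟩, rfl⟩ := hX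
  obtain ⟨W2, ⟨a', b', c', d', e', f', g', h', rfl⟩, rfl⟩ := hY
  refine ⟨Omat a b c d e f g h + Omat a' b' c' d' e' f' g' h',
    ⟨a+a', b+b', c+c', d+d', e+e', f+f', g+g', h+h', Omat_add ..⟩, ?_⟩
  rw [mul_add, smul_add]

end CS

/-- Coset code bound: if `X = (X₁,…,X_L)` with `Xᵢ = cᵢ + Zᵢ`, `Zᵢ ∈ I` an ideal of
`𝒢`, and the coset leaders `(c₁,…,c_L)` are selected by a binary code of minimum
Hamming distance `d_min` (so either all `cᵢ ∈ I`, or at least `d_min` of them lie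
outside `I`), then for `X ≠ 0`,
`det(Σᵢ XᵢXᵢᴴ) ≥ min( min_{0 ≠ Z ∈ I} |det Z|², d_min²·(1/5) )`. -/
theorem coset_code_bound (L : ℕ) (I : AddSubgroup (Matrix (Fin 2) (Fin 2) ℂ))
    (hIG : ∀ x ∈ I, inG x) (dmin : ℕ)
    (c Z : Fin L → Matrix (Fin 2) (Fin 2) ℂ)
    (hc : ∀ k, inG (c k)) (hZ : ∀ k, Z k ∈ I)
    (hcode : (∀ k, c k ∈ I) ∨ dmin ≤ Set.ncard {k | c k ∉ I})
    (hX0 : (fun k => c k + Z k) ≠ 0) :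
    min (sInf {t : ℝ | ∃ W ∈ I, W ≠ 0 ∧ t = ‖W.det‖ ^ 2})
        ((dmin : ℝ) ^ 2 * (1 / 5))
      ≤ ‖(∑ k, (c k + Z k) * (c k + Z k)ᴴ).det‖ := by
  classical
  set S : Set ℝ := {t : ℝ | ∃ W ∈ I, W ≠ 0 ∧ t = ‖W.det‖ ^ 2} with hS
  set Xk : Fin L → Matrix (Fin 2) (Fin 2) ℂ := fun k => c k + Z k with hXk
  obtain ⟨p, q, z, hp, hq, hzpq, hbound, hmat⟩ := CS.sum_bound Finset.univ Xk
  set T : ℝ := ∑ k, ‖(Xk k).det‖ with hT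
  have hTn : 0 ≤ T := Finset.sum_nonneg fun k _ => norm_nonneg _
  have habs : ‖(∑ k, Xk k * (Xk k)ᴴ).det‖ = p*q - Complex.normSq z := by
    rw [hmat, Matrix.det_fin_two_of, Complex.mul_conj]
    rw [show ((p:ℝ):ℂ) * ((q:ℝ):ℂ) - ((Complex.normSq z : ℝ):ℂ)
        = (((p*q - Complex.normSq z : ℝ)):ℂ) by push_cast; ring]
    rw [Complex.norm_real, Real.norm_eq_abs, abs_of_nonneg]
    nlinarith [sq_nonneg T, hbound]
  rw [habs]
  rcases hcode with hall | hdm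
  · obtain ⟨j, hj⟩ : ∃ j, Xk j ≠ 0 := by
      by_contra hcon
      push_neg at hcon
      exact hX0 (funext fun k => hcon k)
    have hjI : Xk j ∈ I := I.add_mem (hall j) (hZ j)
    have hjS : ‖(Xk j).det‖ ^ 2 ∈ S := ⟨Xk j, hjI, hj, rfl⟩
    have hbdd : BddBelow S := by
      refine ⟨0, fun t ht => ?_⟩
      obtain ⟨W, _, _, rfl⟩ := ht
      positivity
    have h1 : ‖(Xk j).det‖ ≤ T :=
      Finset.single_le_sum (f := fun k => ‖(Xk k).det‖)
        (fun k _ => norm_nonneg _) (Finset.mem_univ j)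
    calc min (sInf S) ((dmin : ℝ) ^ 2 * (1 / 5)) ≤ sInf S := min_le_left _ _
      _ ≤ ‖(Xk j).det‖ ^ 2 := csInf_le hbdd hjS
      _ ≤ T^2 := by nlinarith [norm_nonneg (Xk j).det]
      _ ≤ p*q - Complex.normSq z := hbound
  · set F : Finset (Fin L) := Set.toFinset {k | c k ∉ I} with hF
    have hcard : dmin ≤ F.card := by
      rwa [Set.ncard_eq_toFinset_card'] at hdm
    set s5 : ℝ := Real.sqrt (1/5) with hs5
    have hs5n : 0 ≤ s5 := Real.sqrt_nonneg _
    have hs5sq : s5^2 = 1/5 := Real.sq_sqrt (by norm_num)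
    have hterm : ∀ k ∈ F, s5 ≤ ‖(Xk k).det‖ := by
      intro k hk
      have hkmem : c k ∉ I := by
        rw [hF] at hk
        simpa using Set.mem_toFinset.mp hk
      have hkne : Xk k ≠ 0 := by
        intro h0
        apply hkmem
        have : c k = -(Z k) := by
          have := congrArg (fun M => M - Z k) h0
          simpa [hXk, sub_eq_iff_eq_add] using this
        rw [this]
        exact I.neg_mem (hZ k)
      have hkG : inG (Xk k) := CS.inG_add (hc k) (hIG _ (hZ k))
      have := CS.gdet hkG hkne
      calc s5 = Real.sqrt (1/5) := hs5
        _ ≤ Real.sqrt (‖(Xk k).det‖ ^ 2) := Real.sqrt_le_sqrt this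
        _ = ‖(Xk k).det‖ := Real.sqrt_sq (norm_nonneg _)
    have hTF : (F.card : ℝ) * s5 ≤ T := by
      calc (F.card : ℝ) * s5 = ∑ _k ∈ F, s5 := by rw [Finset.sum_const, nsmul_eq_mul]
        _ ≤ ∑ k ∈ F, ‖(Xk k).det‖ := Finset.sum_le_sum hterm
        _ ≤ T := Finset.sum_le_sum_of_subset_of_nonneg (Finset.subset_univ F)
            (fun k _ _ => norm_nonneg _)
    have hds : (dmin : ℝ) * s5 ≤ T := by
      have : (dmin : ℝ) ≤ (F.card : ℝ) := by exact_mod_cast hcard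
      nlinarith
    calc min (sInf S) ((dmin : ℝ) ^ 2 * (1 / 5)) ≤ (dmin : ℝ) ^ 2 * (1 / 5) :=
        min_le_right _ _
      _ = ((dmin : ℝ) * s5)^2 := by rw [mul_pow, hs5sq]
      _ ≤ T^2 := by nlinarith [mul_nonneg (Nat.cast_nonneg (α := ℝ) dmin) hs5n]
      _ ≤ p*q - Complex.normSq z := hbound
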